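/- Consider the random t-regular hypergraph on n vertices and m = n edges, with t ≤ n/6 and n sufficiently large. Let A be a set of vertices, B a set of edges with |B| ≤ n/3, and J ⊆ A × B any set of vertex–edge pairs. Then the probability that the incidence pattern between A and B is exactly J — i.e., that for every (v, e) ∈ A × B, vertex v belongs to edge e if and only if (v, e) ∈ J — is at most (2t/n)^{|J|}. -/

import Mathlib

open scoped Classical
open Finset

/-- Probability of an event in a finite uniform probability space. -/
noncomputable def pr {Ω : Type*} [Fintype Ω] (p : Ω → Prop) : ℝ :=
  ((Finset.univ.filter p).card : ℝ) / (Fintype.card Ω : ℝ)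

/-- Outcome space of the random `t`-regular hypergraph on `n` vertices and `m` edges:
each vertex independently chooses a uniformly random `t`-element subset of the edges. -/
abbrev RegOmega (n m t : ℕ) := Fin n → {s : Finset (Fin m) // s.card = t}

lemma descFac_mul_pow_le {t n : ℕ} (h : t ≤ n) :
    ∀ j, t.descFactorial j * n ^ j ≤ n.descFactorial j * t ^ j := by
  intro j
  induction j with
  | zero => simp
  | succ j ih =>
    rw [Nat.descFactorial_succ, Nat.descFactorial_succ, pow_succ, pow_succ]
    have h1 : (t - j) * n ≤ (n - j) * t := by
      rw [Nat.sub_mul, Nat.sub_mul, mul_comm n t]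
      exact Nat.sub_le_sub_left (Nat.mul_le_mul_left j h) (t * n)
    calc (t - j) * t.descFactorial j * (n ^ j * n)
        = ((t - j) * n) * (t.descFactorial j * n ^ j) := by ring
      _ ≤ ((n - j) * t) * (n.descFactorial j * t ^ j) := Nat.mul_le_mul h1 ih
      _ = (n - j) * n.descFactorial j * (t ^ j * t) := by ring

lemma choose_mul_pow_le {t n : ℕ} (h : t ≤ n) (j : ℕ) :
    t.choose j * n ^ j ≤ n.choose j * t ^ j := by
  have key := descFac_mul_pow_le h j
  rw [Nat.descFactorial_eq_factorial_mul_choose, Nat.descFactorial_eq_factorial_mul_choose] at key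
  refine Nat.le_of_mul_le_mul_left ?_ (Nat.factorial_pos j)
  calc Nat.factorial j * (t.choose j * n ^ j) = Nat.factorial j * t.choose j * n ^ j := by ring
    _ ≤ Nat.factorial j * n.choose j * t ^ j := key
    _ = Nat.factorial j * (n.choose j * t ^ j) := by ring

lemma choose_ratio {n t j : ℕ} (hn : 0 < n) (htn : t ≤ n) (hjt : j ≤ t) :
    ((n - j).choose (t - j) : ℝ) ≤ ((t : ℝ) / n) ^ j * n.choose t := by
  have hjn : j ≤ n := hjt.trans htn
  have hid : n.choose t * t.choose j = n.choose j * ((n - j).choose (t - j)) :=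
    Nat.choose_mul hjt
  have hidR : (n.choose t : ℝ) * t.choose j = (n.choose j : ℝ) * ((n - j).choose (t - j)) := by
    exact_mod_cast hid
  have hcnj : (0 : ℝ) < (n.choose j : ℝ) := by exact_mod_cast Nat.choose_pos hjn
  have hkey : (t.choose j : ℝ) * (n : ℝ) ^ j ≤ (n.choose j : ℝ) * (t : ℝ) ^ j := by
    exact_mod_cast choose_mul_pow_le htn j
  have hnpos : (0 : ℝ) < (n : ℝ) ^ j := by positivity
  rw [div_pow, div_mul_eq_mul_div, le_div_iff₀ hnpos]
  refine le_of_mul_le_mul_left ?_ hcnj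
  calc (n.choose j : ℝ) * (((n - j).choose (t - j) : ℝ) * (n : ℝ) ^ j)
      = ((n.choose t : ℝ) * (t.choose j : ℝ)) * (n : ℝ) ^ j := by
        rw [← mul_assoc, ← hidR]
    _ = (n.choose t : ℝ) * ((t.choose j : ℝ) * (n : ℝ) ^ j) := by ring
    _ ≤ (n.choose t : ℝ) * ((n.choose j : ℝ) * (t : ℝ) ^ j) := by
        refine mul_le_mul_of_nonneg_left hkey ?_
        positivity
    _ = (n.choose j : ℝ) * ((t : ℝ) ^ j * (n.choose t : ℝ)) := by ring

lemma count_bound {n t : ℕ} (B K : Finset (Fin n)) (hK : K ⊆ B) :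
    (Finset.univ.filter
        (fun x : {s : Finset (Fin n) // s.card = t} => ∀ e ∈ B, (e ∈ x.1 ↔ e ∈ K))).card
      ≤ (n - K.card).choose (t - K.card) := by
  classical
  have hsub : ∀ x : {s : Finset (Fin n) // s.card = t},
      (∀ e ∈ B, (e ∈ x.1 ↔ e ∈ K)) → K ⊆ x.1 := by
    intro x hx e he
    exact (hx e (hK he)).2 he
  have := Finset.card_le_card_of_injOn (fun x : {s : Finset (Fin n) // s.card = t} => x.1 \ K)
    (s := Finset.univ.filter
        (fun x : {s : Finset (Fin n) // s.card = t} => ∀ e ∈ B, (e ∈ x.1 ↔ e ∈ K)))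
    (t := (Finset.univ \ K).powersetCard (t - K.card))
    (by
      intro x hx
      simp only [Finset.mem_coe, Finset.mem_filter, Finset.mem_univ, true_and] at hx
      have hKx : K ⊆ x.1 := hsub x hx
      rw [Finset.mem_coe, Finset.mem_powersetCard]
      constructor
      · exact Finset.sdiff_subset_sdiff (Finset.subset_univ _) Finset.Subset.rfl
      · rw [Finset.card_sdiff_of_subset hKx, x.2])
    (by
      intro x hx y hy hxy
      simp only [Finset.coe_filter, Set.mem_setOf_eq, Finset.mem_univ, true_and] at hx hy
      apply Subtype.ext
      have hx1 : x.1 = (x.1 \ K) ∪ K := (Finset.sdiff_union_of_subset (hsub x hx)).symm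
      have hy1 : y.1 = (y.1 \ K) ∪ K := (Finset.sdiff_union_of_subset (hsub y hy)).symm
      rw [hx1, hy1]
      exact congrArg (· ∪ K) hxy)
  calc _ ≤ ((Finset.univ \ K).powersetCard (t - K.card)).card := this
    _ = (n - K.card).choose (t - K.card) := by
        rw [Finset.card_powersetCard, Finset.card_sdiff_of_subset (Finset.subset_univ _),
          Finset.card_univ, Fintype.card_fin]

lemma vertex_bound {n t : ℕ} (hn : 0 < n) (htn : t ≤ n) (B K : Finset (Fin n)) (hK : K ⊆ B) :
    ((Finset.univ.filter
        (fun x : {s : Finset (Fin n) // s.card = t} => ∀ e ∈ B, (e ∈ x.1 ↔ e ∈ K))).card : ℝ)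
      ≤ ((t : ℝ) / n) ^ K.card * n.choose t := by
  classical
  by_cases hkt : K.card ≤ t
  · calc ((Finset.univ.filter
        (fun x : {s : Finset (Fin n) // s.card = t} => ∀ e ∈ B, (e ∈ x.1 ↔ e ∈ K))).card : ℝ)
        ≤ ((n - K.card).choose (t - K.card) : ℝ) := by exact_mod_cast count_bound B K hK
      _ ≤ _ := choose_ratio hn htn hkt
  · have : (Finset.univ.filter
        (fun x : {s : Finset (Fin n) // s.card = t} => ∀ e ∈ B, (e ∈ x.1 ↔ e ∈ K))) = ∅ := by
      apply Finset.eq_empty_of_forall_notMem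
      intro x hx
      simp only [Finset.mem_filter, Finset.mem_univ, true_and] at hx
      have hKx : K ⊆ x.1 := fun e he => (hx e (hK he)).2 he
      have := Finset.card_le_card hKx
      rw [x.2] at this
      omega
    rw [this]
    simp only [Finset.card_empty, Nat.cast_zero]
    positivity

theorem prob_fixed_incidence_pattern :
    ∃ N : ℕ, ∀ n : ℕ, N ≤ n → ∀ t : ℕ, 6 * t ≤ n →
      ∀ A B : Finset (Fin n), 3 * B.card ≤ n →
      ∀ J : Finset (Fin n × Fin n), J ⊆ A ×ˢ B →
        pr (fun ω : RegOmega n n t =>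
            ∀ v ∈ A, ∀ e ∈ B, (e ∈ (ω v).1 ↔ (v, e) ∈ J)) ≤
          ((2 * t : ℝ) / n) ^ J.card := by
  classical
  refine ⟨1, fun n hn t ht A B hB J hJ => ?_⟩
  have hn0 : 0 < n := hn
  have htn : t ≤ n := le_trans (Nat.le_mul_of_pos_left t (by norm_num)) ht
  set c : ℕ := n.choose t with hc_def
  have hc : 0 < c := Nat.choose_pos htn
  set Q : Fin n → {s : Finset (Fin n) // s.card = t} → Prop :=
    fun v x => v ∈ A → ∀ e ∈ B, (e ∈ x.1 ↔ (v, e) ∈ J) with hQ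
  -- the event factorizes coordinatewise
  have hnum : (Finset.univ.filter
      (fun ω : RegOmega n n t => ∀ v ∈ A, ∀ e ∈ B, (e ∈ (ω v).1 ↔ (v, e) ∈ J))).card
      = ∏ v : Fin n, (Finset.univ.filter (Q v)).card := by
    have h1 : (Finset.univ.filter
        (fun ω : RegOmega n n t => ∀ v ∈ A, ∀ e ∈ B, (e ∈ (ω v).1 ↔ (v, e) ∈ J))).card
        = Fintype.card {ω : RegOmega n n t // ∀ v, Q v (ω v)} := by
      rw [Fintype.card_subtype]
    rw [h1, Fintype.card_congr (Equiv.subtypePiEquivPi), Fintype.card_pi]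
    exact Finset.prod_congr rfl (fun v _ => Fintype.card_subtype _)
  have hden : Fintype.card (RegOmega n n t) = c ^ n := by
    rw [Fintype.card_fun, Fintype.card_finset_len, Fintype.card_fin]
  rw [pr, Finset.filter_congr_decidable, hnum, hden]
  -- rewrite as a product of per-vertex probabilities
  have hprod : ((∏ v : Fin n, (Finset.univ.filter (Q v)).card : ℕ) : ℝ) / ((c ^ n : ℕ) : ℝ)
      = ∏ v : Fin n, (((Finset.univ.filter (Q v)).card : ℝ) / c) := by
    rw [Finset.prod_div_distrib]
    congr 1
    · push_cast; ring
    · rw [Finset.prod_const, Finset.card_univ, Fintype.card_fin]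
      push_cast; ring
  rw [hprod]
  -- per-vertex exponents
  set f : Fin n → ℕ := fun v => (J.filter (fun p => p.1 = v)).card with hf
  have hsum : ∑ v : Fin n, f v = J.card :=
    (Finset.card_eq_sum_card_fiberwise (f := Prod.fst) (fun p _ => Finset.mem_univ p.1)).symm
  have hstep : ∏ v : Fin n, (((Finset.univ.filter (Q v)).card : ℝ) / c)
      ≤ ∏ v : Fin n, ((t : ℝ) / n) ^ f v := by
    apply Finset.prod_le_prod
    · intro v _; positivity
    · intro v _
      by_cases hvA : v ∈ A
      · -- the constrained case
        set K : Finset (Fin n) := B.filter (fun e => (v, e) ∈ J) with hK_def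
        have hKB : K ⊆ B := Finset.filter_subset _ _
        have hfilt : Finset.univ.filter (Q v)
            = Finset.univ.filter
              (fun x : {s : Finset (Fin n) // s.card = t} => ∀ e ∈ B, (e ∈ x.1 ↔ e ∈ K)) := by
          apply Finset.filter_congr
          intro x _
          constructor
          · intro h e he
            rw [h hvA e he, hK_def, Finset.mem_filter]
            exact ⟨fun hx => ⟨he, hx⟩, fun hx => hx.2⟩
          · intro h _ e he
            rw [h e he, hK_def, Finset.mem_filter]
            exact ⟨fun hx => hx.2, fun hx => ⟨he, hx⟩⟩
        have hfK : f v = K.card := by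
          rw [hf, hK_def]
          apply Finset.card_bij (fun p _ => p.2)
          · intro p hp
            simp only [Finset.mem_filter] at hp ⊢
            have hmem := hJ hp.1
            rw [Finset.mem_product] at hmem
            refine ⟨hmem.2, ?_⟩
            have : (p.1, p.2) = p := rfl
            rw [← hp.2, this]
            exact hp.1
          · intro p hp q hq hpq
            simp only [Finset.mem_filter] at hp hq
            exact Prod.ext (hp.2.trans hq.2.symm) hpq
          · intro e he
            simp only [Finset.mem_filter] at he
            exact ⟨(v, e), Finset.mem_filter.mpr ⟨he.2, rfl⟩, rfl⟩
        have hbound := vertex_bound hn0 htn B K hKB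
        rw [hfilt, hfK]
        rw [div_le_iff₀ (by exact_mod_cast hc)]
        exact hbound
      · -- the unconstrained case
        have hfv : f v = 0 := by
          rw [hf, Finset.card_eq_zero]
          apply Finset.eq_empty_of_forall_notMem
          intro p hp
          simp only [Finset.mem_filter] at hp
          have hmem := hJ hp.1
          rw [Finset.mem_product] at hmem
          exact hvA (hp.2 ▸ hmem.1)
        have hfilt : Finset.univ.filter (Q v) = Finset.univ := by
          apply Finset.filter_true_of_mem
          intro x _ hvA'
          exact absurd hvA' hvA
        rw [hfv, hfilt, pow_zero, Finset.card_univ, Fintype.card_finset_len, Fintype.card_fin]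
        rw [div_le_one (by exact_mod_cast hc)]
  refine le_trans hstep ?_
  rw [Finset.prod_pow_eq_pow_sum, hsum]
  have hnR : (0 : ℝ) < n := by exact_mod_cast hn0
  apply pow_le_pow_left₀ (by positivity)
  rw [div_le_div_iff₀ hnR hnR]
  have : (0:ℝ) ≤ (t : ℝ) * n := by positivity
  nlinarith [Nat.cast_nonneg (α := ℝ) t]
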